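/- Let ‖·‖ be a norm on c₀₀ that is permutation-invariant and multiplicative, let p ∈ [1,+∞), and suppose ‖1ⁿ‖ = n^{1/p} for every n ≥ 1. Then for every x ∈ c₀₀ one has ‖x‖ ≥ ‖x‖_p. -/

import Mathlib

/-- Tensor product of finitely supported sequences, regarded as a finitely
supported sequence via a fixed bijection `e : ℕ ≃ ℕ × ℕ`. -/
noncomputable def tensor (e : ℕ ≃ ℕ × ℕ) (x y : ℕ →₀ ℝ) : ℕ →₀ ℝ :=
  Finsupp.onFinset ((x.support ×ˢ y.support).image e.symm)
    (fun n => x (e n).1 * y (e n).2)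
    (fun n h => by
      simp only [Finset.mem_image, Finset.mem_product]
      exact ⟨e n, ⟨Finsupp.mem_support_iff.2 (left_ne_zero_of_mul h),
        Finsupp.mem_support_iff.2 (right_ne_zero_of_mul h)⟩, e.symm_apply_apply n⟩)

/-- The sequence `1ⁿ` consisting of `n` ones followed by zeros. -/
noncomputable def oneVec (n : ℕ) : ℕ →₀ ℝ :=
  Finsupp.indicator (Finset.range n) (fun _ _ => 1)

/-! ### Auxiliary material -/

lemma tensor_apply (e : ℕ ≃ ℕ × ℕ) (x y : ℕ →₀ ℝ) (n : ℕ) :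
    tensor e x y n = x (e n).1 * y (e n).2 := rfl

/-- ℕ-valued tensor product, used for bookkeeping of values. -/
noncomputable def tensorN (e : ℕ ≃ ℕ × ℕ) (x y : ℕ →₀ ℕ) : ℕ →₀ ℕ :=
  Finsupp.onFinset ((x.support ×ˢ y.support).image e.symm)
    (fun n => x (e n).1 * y (e n).2)
    (fun n h => by
      simp only [Finset.mem_image, Finset.mem_product]
      exact ⟨e n, ⟨Finsupp.mem_support_iff.2 (left_ne_zero_of_mul h),
        Finsupp.mem_support_iff.2 (right_ne_zero_of_mul h)⟩, e.symm_apply_apply n⟩)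

lemma tensorN_apply (e : ℕ ≃ ℕ × ℕ) (x y : ℕ →₀ ℕ) (n : ℕ) :
    tensorN e x y n = x (e n).1 * y (e n).2 := rfl

/-- Iterated tensor power of a ℕ-valued finsupp. -/
noncomputable def UPow (e : ℕ ≃ ℕ × ℕ) (Z : ℕ →₀ ℕ) : ℕ → (ℕ →₀ ℕ)
  | 0 => Finsupp.single 0 1
  | r + 1 => tensorN e Z (UPow e Z r)

/-- Real version of a ℕ-valued finsupp, taking `p`-th roots of entries. -/
noncomputable def toR (p : ℝ) (Z : ℕ →₀ ℕ) : ℕ →₀ ℝ :=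
  Z.mapRange (fun v : ℕ => if v = 0 then 0 else (v : ℝ) ^ (1 / p)) (by simp)

section Basic

variable (N : (ℕ →₀ ℝ) → ℝ)

lemma N_zero (hsmul : ∀ (c : ℝ) (x), N (c • x) = |c| * N x) : N 0 = 0 := by
  have := hsmul 0 0
  simpa using this

lemma N_neg (hsmul : ∀ (c : ℝ) (x), N (c • x) = |c| * N x) (x : ℕ →₀ ℝ) :
    N (-x) = N x := by
  have := hsmul (-1) x
  simpa using this

lemma N_nonneg (hadd : ∀ x y, N (x + y) ≤ N x + N y)
    (hsmul : ∀ (c : ℝ) (x), N (c • x) = |c| * N x) (x : ℕ →₀ ℝ) : 0 ≤ N x := by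
  have h := hadd x (-x)
  rw [add_neg_cancel, N_zero N hsmul, N_neg N hsmul] at h
  linarith

end Basic

section Flip

variable (e : ℕ ≃ ℕ × ℕ) (N : (ℕ →₀ ℝ) → ℝ)

/-- Flipping the sign of one coordinate does not change the norm. -/
lemma N_flip
    (hdef : ∀ x, N x = 0 ↔ x = 0)
    (hperm : ∀ (σ : Equiv.Perm ℕ) (x), N (Finsupp.equivMapDomain σ x) = N x)
    (hmul : ∀ x y, N (tensor e x y) = N x * N y)
    (j : ℕ) (x : ℕ →₀ ℝ) :
    N (x.update j (-(x j))) = N x := by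
  classical
  set v : ℕ →₀ ℝ := Finsupp.single 0 1 + Finsupp.single 1 (-1) with hv
  have hv0 : v 0 = 1 := by simp [hv, Finsupp.single_apply]
  have hv1 : v 1 = -1 := by simp [hv, Finsupp.single_apply]
  have hvk : ∀ a : ℕ, a ≠ 0 → a ≠ 1 → v a = 0 := by
    intro a h0 h1
    simp [hv, Finsupp.single_apply, Ne.symm h0, Ne.symm h1]
  have hvne : N v ≠ 0 := by
    rw [Ne, hdef]
    intro h
    have : v 0 = 0 := by rw [h]; rfl
    rw [hv0] at this; norm_num at this
  have hne : e.symm (0, j) ≠ e.symm (1, j) := by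
    intro h
    have := e.symm.injective h
    simp at this
  set x' := x.update j (-(x j)) with hx'
  have hx'j : x' j = -(x j) := by
    simp [hx', Finsupp.coe_update, Function.update_self]
  have hx'k : ∀ i, i ≠ j → x' i = x i := by
    intro i hi
    simp [hx', Finsupp.coe_update, Function.update_of_ne hi]
  set σ : Equiv.Perm ℕ := Equiv.swap (e.symm (0, j)) (e.symm (1, j)) with hσ
  have key : Finsupp.equivMapDomain σ (tensor e v x) = tensor e v x' := by
    ext n
    rw [Finsupp.equivMapDomain_apply]
    have hσs : σ.symm = σ := by rw [hσ, Equiv.symm_swap]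
    rw [hσs]
    by_cases h0 : n = e.symm (0, j)
    · subst h0
      rw [hσ, Equiv.swap_apply_left, tensor_apply, tensor_apply,
        e.apply_symm_apply, e.apply_symm_apply]
      simp only [hv0, hv1, hx'j]
      ring
    · by_cases h1 : n = e.symm (1, j)
      · subst h1
        rw [hσ, Equiv.swap_apply_right, tensor_apply, tensor_apply,
          e.apply_symm_apply, e.apply_symm_apply]
        simp only [hv0, hv1, hx'j]
        ring
      · rw [hσ, Equiv.swap_apply_of_ne_of_ne h0 h1, tensor_apply, tensor_apply]
        by_cases h2 : (e n).2 = j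
        · have ha0 : (e n).1 ≠ 0 := by
            intro h
            apply h0
            have : e n = (0, j) := Prod.ext h h2
            rw [← e.symm_apply_apply n, this]
          have ha1 : (e n).1 ≠ 1 := by
            intro h
            apply h1
            have : e n = (1, j) := Prod.ext h h2
            rw [← e.symm_apply_apply n, this]
          rw [hvk _ ha0 ha1]
          ring
        · rw [hx'k _ h2]
  have h1 := hperm σ (tensor e v x)
  rw [key, hmul, hmul] at h1
  exact mul_left_cancel₀ hvne h1

end Flip

section Mono

variable (e : ℕ ≃ ℕ × ℕ) (N : (ℕ →₀ ℝ) → ℝ)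

lemma N_scale
    (hadd : ∀ x y, N (x + y) ≤ N x + N y)
    (hsmul : ∀ (c : ℝ) (x), N (c • x) = |c| * N x)
    (hdef : ∀ x, N x = 0 ↔ x = 0)
    (hperm : ∀ (σ : Equiv.Perm ℕ) (x), N (Finsupp.equivMapDomain σ x) = N x)
    (hmul : ∀ x y, N (tensor e x y) = N x * N y)
    (j : ℕ) (x : ℕ →₀ ℝ) (c : ℝ) (hc : |c| ≤ 1) :
    N (x.update j (c * x j)) ≤ N x := by
  classical
  obtain ⟨hc1, hc2⟩ := abs_le.1 hc
  have hflip := N_flip e N hdef hperm hmul j x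
  have hdecomp : x.update j (c * x j)
      = ((1 + c) / 2) • x + ((1 - c) / 2) • (x.update j (-(x j))) := by
    ext i
    rw [Finsupp.add_apply, Finsupp.smul_apply, Finsupp.smul_apply, smul_eq_mul, smul_eq_mul]
    by_cases h : i = j
    · subst h
      simp only [Finsupp.coe_update, Function.update_self]
      ring
    · simp only [Finsupp.coe_update, Function.update_of_ne h]
      ring
  rw [hdecomp]
  refine le_trans (hadd _ _) ?_
  rw [hsmul, hsmul, hflip]
  have h1 : |(1 + c) / 2| = (1 + c) / 2 := abs_of_nonneg (by linarith)
  have h2 : |(1 - c) / 2| = (1 - c) / 2 := abs_of_nonneg (by linarith)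
  rw [h1, h2]
  ring_nf
  linarith

lemma N_mono_aux
    (hadd : ∀ x y, N (x + y) ≤ N x + N y)
    (hsmul : ∀ (c : ℝ) (x), N (c • x) = |c| * N x)
    (hdef : ∀ x, N x = 0 ↔ x = 0)
    (hperm : ∀ (σ : Equiv.Perm ℕ) (x), N (Finsupp.equivMapDomain σ x) = N x)
    (hmul : ∀ x y, N (tensor e x y) = N x * N y) :
    ∀ (S : Finset ℕ) (x y : ℕ →₀ ℝ), (∀ i, |y i| ≤ |x i|) →
      (∀ i, i ∉ S → y i = x i) → N y ≤ N x := by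
  classical
  intro S
  induction S using Finset.induction_on with
  | empty =>
      intro x y h1 h2
      have : y = x := Finsupp.ext fun i => h2 i (by simp)
      rw [this]
  | @insert j s hj ih =>
      intro x y h1 h2
      set x₁ := x.update j (y j) with hx₁
      have hx₁j : x₁ j = y j := by
        simp [hx₁, Finsupp.coe_update, Function.update_self]
      have hx₁k : ∀ i, i ≠ j → x₁ i = x i := by
        intro i hi
        simp [hx₁, Finsupp.coe_update, Function.update_of_ne hi]
      have hstep : N x₁ ≤ N x := by
        rcases eq_or_ne (x j) 0 with h0 | h0
        · have hyj : y j = 0 := by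
            have := h1 j
            rw [h0, abs_zero] at this
            exact abs_eq_zero.1 (le_antisymm this (abs_nonneg _))
          have : x₁ = x := by
            ext i
            by_cases hij : i = j
            · subst hij; rw [hx₁j, hyj, h0]
            · exact hx₁k i hij
          rw [this]
        · have hdiv : |y j / x j| ≤ 1 := by
            rw [abs_div]
            rw [div_le_one (abs_pos.2 h0)]
            exact h1 j
          have := N_scale e N hadd hsmul hdef hperm hmul j x (y j / x j) hdiv
          rwa [div_mul_cancel₀ _ h0] at this
      refine le_trans (ih x₁ y ?_ ?_) hstep
      · intro i
        by_cases hij : i = j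
        · subst hij; rw [hx₁j]
        · rw [hx₁k i hij]; exact h1 i
      · intro i hi
        by_cases hij : i = j
        · subst hij; rw [hx₁j]
        · rw [hx₁k i hij]
          exact h2 i (by simp [hij, hi])

lemma N_mono
    (hadd : ∀ x y, N (x + y) ≤ N x + N y)
    (hsmul : ∀ (c : ℝ) (x), N (c • x) = |c| * N x)
    (hdef : ∀ x, N x = 0 ↔ x = 0)
    (hperm : ∀ (σ : Equiv.Perm ℕ) (x), N (Finsupp.equivMapDomain σ x) = N x)
    (hmul : ∀ x y, N (tensor e x y) = N x * N y)
    (x y : ℕ →₀ ℝ) (h : ∀ i, |y i| ≤ |x i|) : N y ≤ N x := by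
  classical
  refine N_mono_aux e N hadd hsmul hdef hperm hmul (x.support ∪ y.support) x y h ?_
  intro i hi
  simp only [Finset.mem_union, Finsupp.mem_support_iff, not_or, not_not] at hi
  rw [hi.1, hi.2]

end Mono

section Perm

lemma exists_perm_finset (S T : Finset ℕ) (h : S.card = T.card) :
    ∃ σ : Equiv.Perm ℕ, ∀ b, σ.symm b ∈ S ↔ b ∈ T := by
  classical
  have hS : ((S : Set ℕ)ᶜ).Infinite := S.finite_toSet.infinite_compl
  have hT : ((T : Set ℕ)ᶜ).Infinite := T.finite_toSet.infinite_compl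
  haveI := hS.to_subtype
  haveI := hT.to_subtype
  haveI dS : Denumerable ↥((S : Set ℕ)ᶜ) := (nonempty_denumerable _).some
  haveI dT : Denumerable ↥((T : Set ℕ)ᶜ) := (nonempty_denumerable _).some
  let e2 : ↥((S : Set ℕ)ᶜ) ≃ ↥((T : Set ℕ)ᶜ) :=
    (Denumerable.eqv _).trans (Denumerable.eqv _).symm
  let e1 : ↥(S : Set ℕ) ≃ ↥(T : Set ℕ) :=
    (Equiv.subtypeEquivRight (fun x => Finset.mem_coe)).trans
      ((Finset.equivOfCardEq h).trans (Equiv.subtypeEquivRight (fun x => Finset.mem_coe.symm)))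
  let σ : Equiv.Perm ℕ := ((Equiv.Set.sumCompl (S : Set ℕ)).symm.trans
    ((e1.sumCongr e2).trans (Equiv.Set.sumCompl (T : Set ℕ))))
  have hfwd : ∀ a, a ∈ S → σ a ∈ T := by
    intro a ha
    have h1 : (Equiv.Set.sumCompl (S : Set ℕ)).symm a
        = Sum.inl ⟨a, Finset.mem_coe.2 ha⟩ :=
      Equiv.Set.sumCompl_symm_apply_of_mem (Finset.mem_coe.2 ha)
    have : σ a = ↑(e1 ⟨a, Finset.mem_coe.2 ha⟩) := by
      simp only [σ, Equiv.trans_apply, h1, Equiv.sumCongr_apply, Sum.map_inl,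
        Equiv.Set.sumCompl_apply_inl]
    rw [this]
    exact Finset.mem_coe.1 (e1 ⟨a, Finset.mem_coe.2 ha⟩).2
  have hnot : ∀ a, a ∉ S → σ a ∉ T := by
    intro a ha
    have ha' : a ∈ ((S : Set ℕ)ᶜ) := by simpa using ha
    have h1 : (Equiv.Set.sumCompl (S : Set ℕ)).symm a = Sum.inr ⟨a, ha'⟩ :=
      Equiv.Set.sumCompl_symm_apply_of_notMem ha'
    have : σ a = ↑(e2 ⟨a, ha'⟩) := by
      simp only [σ, Equiv.trans_apply, h1, Equiv.sumCongr_apply, Sum.map_inr,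
        Equiv.Set.sumCompl_apply_inr]
    rw [this]
    exact fun hmem => (e2 ⟨a, ha'⟩).2 (Finset.mem_coe.2 hmem)
  refine ⟨σ, fun b => ⟨?_, ?_⟩⟩
  · intro hb
    have := hfwd _ hb
    rwa [Equiv.apply_symm_apply] at this
  · intro hb
    by_contra hS'
    have := hnot _ hS'
    rw [Equiv.apply_symm_apply] at this
    exact this hb

lemma N_const_indicator (N : (ℕ →₀ ℝ) → ℝ)
    (hsmul : ∀ (c : ℝ) (x), N (c • x) = |c| * N x)
    (hperm : ∀ (σ : Equiv.Perm ℕ) (x), N (Finsupp.equivMapDomain σ x) = N x)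
    (c : ℝ) (S : Finset ℕ) :
    N (Finsupp.indicator S (fun _ _ => c)) = |c| * N (oneVec S.card) := by
  classical
  obtain ⟨σ, hσ⟩ := exists_perm_finset S (Finset.range S.card) (by rw [Finset.card_range])
  have key : Finsupp.equivMapDomain σ (Finsupp.indicator S (fun _ _ => c))
      = Finsupp.indicator (Finset.range S.card) (fun _ _ => c) := by
    ext b
    rw [Finsupp.equivMapDomain_apply, Finsupp.indicator_apply, Finsupp.indicator_apply]
    by_cases hb : b ∈ Finset.range S.card
    · rw [dif_pos ((hσ b).2 hb), dif_pos hb]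
    · rw [dif_neg (fun hc => hb ((hσ b).1 hc)), dif_neg hb]
  have h1 : Finsupp.indicator (Finset.range S.card) (fun _ _ => c)
      = c • oneVec S.card := by
    ext i
    rw [Finsupp.smul_apply, Finsupp.indicator_apply]
    unfold oneVec
    rw [Finsupp.indicator_apply]
    by_cases hi : i ∈ Finset.range S.card
    · rw [dif_pos hi, dif_pos hi, smul_eq_mul]; ring
    · rw [dif_neg hi, dif_neg hi, smul_eq_mul]; ring
  rw [← hperm σ, key, h1, hsmul]

end Perm

section Count

variable (e : ℕ ≃ ℕ × ℕ)

lemma tensorN_sum (X Y : ℕ →₀ ℕ) :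
    (tensorN e X Y).sum (fun _ v => v)
      = (X.sum fun _ v => v) * (Y.sum fun _ v => v) := by
  classical
  unfold tensorN
  rw [Finsupp.onFinset_sum _ (fun a => rfl)]
  rw [Finset.sum_image (fun a _ b _ h => e.symm.injective h)]
  simp only [Equiv.apply_symm_apply]
  rw [Finset.sum_product]
  rw [Finsupp.sum, Finsupp.sum, Finset.sum_mul_sum]

lemma UPow_sum (Z : ℕ →₀ ℕ) : ∀ r : ℕ,
    (UPow e Z r).sum (fun _ v => v) = (Z.sum fun _ v => v) ^ r := by
  intro r
  induction r with
  | zero =>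
      simp [UPow, Finsupp.sum_single_index]
  | succ r ih =>
      rw [UPow, tensorN_sum, ih, pow_succ]
      ring

lemma UPow_values (Z : ℕ →₀ ℕ) : ∀ (r : ℕ) (n : ℕ), UPow e Z r n ≠ 0 →
    ∃ c : ℕ → ℕ, (∀ i, c i ≤ r) ∧ UPow e Z r n = ∏ i ∈ Z.support, Z i ^ c i := by
  classical
  intro r
  induction r with
  | zero =>
      intro n hn
      refine ⟨fun _ => 0, fun _ => le_refl 0, ?_⟩
      simp only [pow_zero, Finset.prod_const_one]
      rw [UPow] at hn ⊢
      rw [Finsupp.single_apply] at hn ⊢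
      by_cases h : (0 : ℕ) = n
      · rw [if_pos h]
      · rw [if_neg h] at hn; exact absurd rfl hn
  | succ r ih =>
      intro n hn
      rw [UPow, tensorN_apply] at hn
      have ha := left_ne_zero_of_mul hn
      have hb := right_ne_zero_of_mul hn
      obtain ⟨c, hc, hcv⟩ := ih _ hb
      refine ⟨fun i => c i + (if i = (e n).1 then 1 else 0), fun i => ?_, ?_⟩
      · have := hc i
        simp only []
        split <;> omega
      · rw [UPow, tensorN_apply, hcv]
        have hmem : (e n).1 ∈ Z.support := Finsupp.mem_support_iff.2 ha
        rw [Finset.prod_congr rfl (fun i _ => pow_add (Z i) (c i) _)]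
        rw [Finset.prod_mul_distrib]
        have hprod : ∏ i ∈ Z.support, Z i ^ (if i = (e n).1 then 1 else 0)
            = Z (e n).1 := by
          have h1 : ∀ i ∈ Z.support,
              Z i ^ (if i = (e n).1 then 1 else 0) = if i = (e n).1 then Z i else 1 := by
            intro i _
            split <;> simp
          rw [Finset.prod_congr rfl h1, Finset.prod_ite_eq' Z.support (e n).1 Z,
            if_pos hmem]
        rw [hprod]
        ring

lemma UPow_card_values (Z : ℕ →₀ ℕ) (r : ℕ) :
    (((UPow e Z r).support).image (UPow e Z r)).card ≤ (r + 1) ^ Z.support.card := by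
  classical
  have hsub : ((UPow e Z r).support).image (UPow e Z r) ⊆
      (Fintype.piFinset (fun _ : ↥Z.support => Finset.range (r + 1))).image
        (fun c => ∏ i : ↥Z.support, Z ↑i ^ c i) := by
    intro v hv
    rw [Finset.mem_image] at hv ⊢
    obtain ⟨n, hn, rfl⟩ := hv
    obtain ⟨c, hc, hcv⟩ := UPow_values e Z r n (Finsupp.mem_support_iff.1 hn)
    refine ⟨fun i => c ↑i, ?_, ?_⟩
    · rw [Fintype.mem_piFinset]
      intro i
      rw [Finset.mem_range]
      exact Nat.lt_succ_of_le (hc ↑i)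
    · rw [hcv]
      exact Finset.prod_coe_sort Z.support (fun i => Z i ^ c i)
  refine le_trans (Finset.card_le_card hsub) (le_trans Finset.card_image_le ?_)
  rw [Fintype.card_piFinset]
  simp

end Count

section RealSide

lemma toR_apply (p : ℝ) (hp : p ≠ 0) (Z : ℕ →₀ ℕ) (n : ℕ) :
    toR p Z n = ((Z n : ℝ)) ^ (1 / p) := by
  unfold toR
  rw [Finsupp.mapRange_apply]
  by_cases h : Z n = 0
  · rw [if_pos h, h]
    rw [Nat.cast_zero, Real.zero_rpow (one_div_ne_zero hp)]
  · rw [if_neg h]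

lemma toR_tensorN (p : ℝ) (hp : p ≠ 0) (e : ℕ ≃ ℕ × ℕ) (X Y : ℕ →₀ ℕ) :
    toR p (tensorN e X Y) = tensor e (toR p X) (toR p Y) := by
  ext n
  rw [toR_apply p hp, tensor_apply, toR_apply p hp, toR_apply p hp, tensorN_apply]
  push_cast
  exact Real.mul_rpow (Nat.cast_nonneg _) (Nat.cast_nonneg _)

lemma toR_single (p : ℝ) : toR p (Finsupp.single 0 1) = oneVec 1 := by
  ext n
  unfold toR oneVec
  rw [Finsupp.mapRange_apply, Finsupp.indicator_apply, Finsupp.single_apply]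
  by_cases h : (0 : ℕ) = n
  · subst h
    simp
  · rw [if_neg h]
    have hn : n ∉ Finset.range 1 := by
      rw [Finset.mem_range]
      omega
    rw [dif_neg hn]
    simp

lemma N_toR_UPow (e : ℕ ≃ ℕ × ℕ) (N : (ℕ →₀ ℝ) → ℝ)
    (hmul : ∀ x y, N (tensor e x y) = N x * N y)
    (p : ℝ) (hp : p ≠ 0)
    (hone1 : N (oneVec 1) = 1) (Z : ℕ →₀ ℕ) :
    ∀ r : ℕ, N (toR p (UPow e Z r)) = (N (toR p Z)) ^ r := by
  intro r
  induction r with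
  | zero =>
      rw [UPow, toR_single, hone1, pow_zero]
  | succ r ih =>
      rw [UPow, toR_tensorN p hp, hmul, ih, pow_succ]
      ring

end RealSide

section Core

lemma core_lemma (e : ℕ ≃ ℕ × ℕ) (N : (ℕ →₀ ℝ) → ℝ)
    (hadd : ∀ x y, N (x + y) ≤ N x + N y)
    (hsmul : ∀ (c : ℝ) (x), N (c • x) = |c| * N x)
    (hdef : ∀ x, N x = 0 ↔ x = 0)
    (hperm : ∀ (σ : Equiv.Perm ℕ) (x), N (Finsupp.equivMapDomain σ x) = N x)
    (hmul : ∀ x y, N (tensor e x y) = N x * N y)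
    (p : ℝ) (hp : 1 ≤ p)
    (hone : ∀ n : ℕ, 1 ≤ n → N (oneVec n) = (n : ℝ) ^ (1 / p))
    (Z : ℕ →₀ ℕ) :
    (((Z.sum fun _ v => v : ℕ)) : ℝ) ^ (1 / p) ≤ N (toR p Z) := by
  classical
  have hp0 : (0 : ℝ) < p := lt_of_lt_of_le one_pos hp
  have hpne : p ≠ 0 := ne_of_gt hp0
  have hq : (0 : ℝ) < 1 / p := by positivity
  have hone1 : N (oneVec 1) = 1 := by
    rw [hone 1 le_rfl, Nat.cast_one, Real.one_rpow]
  set K := Z.sum fun _ v => v with hK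
  rcases Nat.eq_zero_or_pos K with hK0 | hKpos
  · rw [hK0, Nat.cast_zero, Real.zero_rpow (ne_of_gt hq)]
    exact N_nonneg N hadd hsmul _
  set a := N (toR p Z) with ha
  have ha0 : 0 < a := by
    have hne : toR p Z ≠ 0 := by
      intro h
      have hZ : Z = 0 := by
        ext i
        simp only [Finsupp.coe_zero, Pi.zero_apply]
        by_contra hzi
        have h0 : toR p Z i = 0 := by rw [h]; rfl
        rw [toR_apply p hpne] at h0
        have hpos : (0 : ℝ) < (Z i : ℝ) := by
          exact_mod_cast Nat.pos_of_ne_zero hzi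
        have := Real.rpow_pos_of_pos hpos (1 / p)
        linarith
      rw [hZ] at hK
      simp [hK] at hKpos
    have h1 : N (toR p Z) ≠ 0 := fun h => hne ((hdef _).1 h)
    exact lt_of_le_of_ne (N_nonneg N hadd hsmul _) (Ne.symm h1)
  set b := a ^ p with hb
  have hb0 : 0 < b := Real.rpow_pos_of_pos ha0 p
  set d := Z.support.card with hd
  have main : ∀ r : ℕ, 1 ≤ r → ((K : ℝ) / b) ^ r ≤ ((r : ℝ) + 1) ^ d := by
    intro r _
    set U := UPow e Z r with hU
    set V := U.support.image U with hV
    have hsum : ∑ n ∈ U.support, U n = K ^ r := by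
      have := UPow_sum e Z r
      rw [Finsupp.sum] at this
      exact this
    have hVne : V.Nonempty := by
      refine Finset.Nonempty.image ?_ _
      rw [Finset.nonempty_iff_ne_empty]
      intro h
      rw [h, Finset.sum_empty] at hsum
      have := pow_pos hKpos r
      omega
    obtain ⟨v₀, hv₀V, hmax⟩ := Finset.exists_max_image V
      (fun v => (U.support.filter (fun n => U n = v)).card * v) hVne
    set c₀ := (U.support.filter (fun n => U n = v₀)).card with hc₀
    have hfib : ∑ v ∈ V, (∑ n ∈ U.support.filter (fun n => U n = v), U n) = K ^ r := by
      rw [Finset.sum_fiberwise_of_maps_to (fun n hn => Finset.mem_image_of_mem U hn), hsum]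
    have hfib2 : ∀ v ∈ V, ∑ n ∈ U.support.filter (fun n => U n = v), U n
        = (U.support.filter (fun n => U n = v)).card * v := by
      intro v _
      rw [Finset.sum_congr rfl (fun n hn => (Finset.mem_filter.1 hn).2),
        Finset.sum_const, smul_eq_mul]
    have hpig : K ^ r ≤ V.card * (c₀ * v₀) := by
      rw [← hfib, Finset.sum_congr rfl hfib2]
      have := Finset.sum_le_card_nsmul V
        (fun v => (U.support.filter (fun n => U n = v)).card * v) (c₀ * v₀)
        (fun v hv => hmax v hv)
      rwa [smul_eq_mul] at this
    have hv₀pos : 0 < v₀ := by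
      obtain ⟨n, hn, rfl⟩ := Finset.mem_image.1 hv₀V
      exact Nat.pos_of_ne_zero (Finsupp.mem_support_iff.1 hn)
    have hc₀pos : 0 < c₀ := by
      obtain ⟨n, hn, hnv⟩ := Finset.mem_image.1 hv₀V
      exact Finset.card_pos.2 ⟨n, Finset.mem_filter.2 ⟨hn, hnv⟩⟩
    have hcomp : (((v₀ * c₀ : ℕ)) : ℝ) ^ (1 / p) ≤ a ^ r := by
      have hNU : N (toR p U) = a ^ r := N_toR_UPow e N hmul p hpne hone1 Z r
      set S := U.support.filter (fun n => U n = v₀) with hS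
      set w : ℕ →₀ ℝ := Finsupp.indicator S (fun _ _ => ((v₀ : ℝ)) ^ (1 / p)) with hw
      have hwle : ∀ i, |w i| ≤ |toR p U i| := by
        intro i
        rw [hw, Finsupp.indicator_apply]
        by_cases hi : i ∈ S
        · rw [dif_pos hi]
          have hUi : U i = v₀ := (Finset.mem_filter.1 hi).2
          rw [toR_apply p hpne, hUi]
        · rw [dif_neg hi]
          simp only [abs_zero]
          exact abs_nonneg _
      have h1 : N w ≤ a ^ r := by
        rw [← hNU]
        exact N_mono e N hadd hsmul hdef hperm hmul _ w hwle
      have h2 : N w = ((v₀ : ℝ) ^ (1 / p)) * ((c₀ : ℝ) ^ (1 / p)) := by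
        rw [hw, N_const_indicator N hsmul hperm,
          abs_of_nonneg (Real.rpow_nonneg (Nat.cast_nonneg _) _)]
        congr 1
        rw [← hc₀]
        exact hone c₀ hc₀pos
      calc (((v₀ * c₀ : ℕ)) : ℝ) ^ (1 / p)
          = ((v₀ : ℝ) * (c₀ : ℝ)) ^ (1 / p) := by push_cast; ring_nf
        _ = ((v₀ : ℝ) ^ (1 / p)) * ((c₀ : ℝ) ^ (1 / p)) :=
            Real.mul_rpow (Nat.cast_nonneg _) (Nat.cast_nonneg _)
        _ = N w := h2.symm
        _ ≤ a ^ r := h1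
    have hbr : ((v₀ * c₀ : ℕ) : ℝ) ≤ b ^ r := by
      have h3 := Real.rpow_le_rpow (Real.rpow_nonneg (Nat.cast_nonneg _) _) hcomp hp0.le
      have hL : ((((v₀ * c₀ : ℕ) : ℝ)) ^ (1 / p)) ^ p = ((v₀ * c₀ : ℕ) : ℝ) := by
        rw [← Real.rpow_mul (Nat.cast_nonneg _), one_div_mul_cancel hpne, Real.rpow_one]
      have hR : (a ^ r) ^ p = b ^ r := by
        rw [← Real.rpow_natCast a r, ← Real.rpow_natCast b r, hb,
          ← Real.rpow_mul ha0.le, ← Real.rpow_mul ha0.le, mul_comm]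
      rw [hL, hR] at h3
      exact h3
    have hVc : (V.card : ℝ) ≤ ((r : ℝ) + 1) ^ d := by
      have := UPow_card_values e Z r
      calc (V.card : ℝ) ≤ (((r + 1) ^ d : ℕ) : ℝ) := Nat.cast_le.2 this
        _ = ((r : ℝ) + 1) ^ d := by push_cast; ring
    have hcast : ((K : ℝ)) ^ r ≤ ((r : ℝ) + 1) ^ d * ((v₀ * c₀ : ℕ) : ℝ) := by
      calc ((K : ℝ)) ^ r = ((K ^ r : ℕ) : ℝ) := by push_cast; ring
        _ ≤ ((V.card * (c₀ * v₀) : ℕ) : ℝ) := Nat.cast_le.2 hpig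
        _ = (V.card : ℝ) * ((v₀ * c₀ : ℕ) : ℝ) := by push_cast; ring
        _ ≤ ((r : ℝ) + 1) ^ d * ((v₀ * c₀ : ℕ) : ℝ) := by
            exact mul_le_mul_of_nonneg_right hVc (Nat.cast_nonneg _)
    rw [div_pow, div_le_iff₀ (pow_pos hb0 r)]
    calc ((K : ℝ)) ^ r ≤ ((r : ℝ) + 1) ^ d * ((v₀ * c₀ : ℕ) : ℝ) := hcast
      _ ≤ ((r : ℝ) + 1) ^ d * b ^ r := by
          exact mul_le_mul_of_nonneg_left hbr (by positivity)
  have hKb : (K : ℝ) ≤ b := by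
    by_contra hlt
    push_neg at hlt
    set q := (K : ℝ) / b with hqdef
    have hq1 : 1 < q := (one_lt_div hb0).2 hlt
    have hqpos : (0 : ℝ) < q := lt_trans one_pos hq1
    have htend := tendsto_pow_const_div_const_pow_of_one_lt d hq1
    have hev := htend.eventually_lt_const (by positivity : (0 : ℝ) < 1 / q)
    obtain ⟨n, hn2, hnlt⟩ := ((Filter.eventually_ge_atTop 2).and hev).exists
    have hr1 : 1 ≤ n - 1 := by omega
    have h1 := main (n - 1) hr1
    have hcastn : ((n - 1 : ℕ) : ℝ) + 1 = (n : ℝ) := by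
      have h2 : (1 : ℕ) ≤ n := by omega
      rw [Nat.cast_sub h2]
      push_cast
      ring
    rw [hcastn] at h1
    have h2 : q ^ n = q ^ (n - 1) * q := by
      rw [← pow_succ]
      congr 1
      omega
    have h3 : (1 : ℝ) / q ≤ (n : ℝ) ^ d / q ^ n := by
      rw [div_le_div_iff₀ hqpos (pow_pos hqpos n), one_mul, h2]
      exact mul_le_mul_of_nonneg_right h1 hqpos.le
    linarith
  have hfin := Real.rpow_le_rpow (Nat.cast_nonneg K) hKb hq.le
  have : b ^ (1 / p) = a := by
    rw [hb, ← Real.rpow_mul ha0.le, mul_one_div_cancel hpne, Real.rpow_one]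
  rwa [this] at hfin

end Core

/-- Lower bound: if `‖1ⁿ‖ = n^(1/p)` for every `n ≥ 1`, then `‖x‖ ≥ ‖x‖_p`. -/
theorem lp_lower_bound
    (e : ℕ ≃ ℕ × ℕ) (N : (ℕ →₀ ℝ) → ℝ)
    (hadd : ∀ x y, N (x + y) ≤ N x + N y)
    (hsmul : ∀ (c : ℝ) (x), N (c • x) = |c| * N x)
    (hdef : ∀ x, N x = 0 ↔ x = 0)
    (hperm : ∀ (σ : Equiv.Perm ℕ) (x), N (Finsupp.equivMapDomain σ x) = N x)
    (hmul : ∀ x y, N (tensor e x y) = N x * N y)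
    (p : ℝ) (hp : 1 ≤ p)
    (hone : ∀ n : ℕ, 1 ≤ n → N (oneVec n) = (n : ℝ) ^ (1 / p)) :
    ∀ x : ℕ →₀ ℝ, (∑ i ∈ x.support, |x i| ^ p) ^ (1 / p) ≤ N x := by
  classical
  intro x
  have hp0 : (0 : ℝ) < p := lt_of_lt_of_le one_pos hp
  have hpne : p ≠ 0 := ne_of_gt hp0
  have hq : (0 : ℝ) < 1 / p := by positivity
  have hNx : 0 ≤ N x := N_nonneg N hadd hsmul x
  have hsum0 : 0 ≤ ∑ i ∈ x.support, |x i| ^ p :=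
    Finset.sum_nonneg fun i _ => Real.rpow_nonneg (abs_nonneg _) _
  suffices h : (∑ i ∈ x.support, |x i| ^ p) ≤ (N x) ^ p by
    have h2 := Real.rpow_le_rpow hsum0 h hq.le
    rwa [← Real.rpow_mul hNx, mul_one_div_cancel hpne, Real.rpow_one] at h2
  refine le_of_forall_pos_le_add ?_
  intro ε hε
  set dd := (x.support.card : ℝ) with hdd
  obtain ⟨m, hm⟩ := exists_nat_gt (dd / ε)
  have hm0 : 0 < m := by
    have h0 : (0 : ℝ) ≤ dd / ε := by positivity
    have : (0 : ℝ) < (m : ℝ) := lt_of_le_of_lt h0 hm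
    exact_mod_cast this
  have hmR : (0 : ℝ) < (m : ℝ) := by exact_mod_cast hm0
  set Z : ℕ →₀ ℕ := Finsupp.onFinset x.support (fun n => ⌊(m : ℝ) * |x n| ^ p⌋₊)
    (fun n h => by
      rw [Finsupp.mem_support_iff]
      intro hx0
      apply h
      show ⌊(m : ℝ) * |x n| ^ p⌋₊ = 0
      rw [hx0, abs_zero, Real.zero_rpow hpne, mul_zero, Nat.floor_zero]) with hZ
  have hZapp : ∀ n, Z n = ⌊(m : ℝ) * |x n| ^ p⌋₊ := fun n => rfl
  set K := Z.sum fun _ v => v with hK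
  have h1 : ((K : ℝ)) ^ (1 / p) ≤ N (toR p Z) :=
    core_lemma e N hadd hsmul hdef hperm hmul p hp hone Z
  have h2 : N (toR p Z) ≤ ((m : ℝ) ^ (1 / p)) * N x := by
    have hc : N (((m : ℝ) ^ (1 / p)) • x) = ((m : ℝ) ^ (1 / p)) * N x := by
      rw [hsmul, abs_of_nonneg (Real.rpow_nonneg (Nat.cast_nonneg _) _)]
    rw [← hc]
    apply N_mono e N hadd hsmul hdef hperm hmul
    intro i
    rw [toR_apply p hpne, Finsupp.smul_apply, smul_eq_mul]
    have hZle : ((Z i : ℝ)) ≤ (m : ℝ) * |x i| ^ p := by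
      rw [hZapp]
      exact Nat.floor_le (by positivity)
    rw [abs_of_nonneg (Real.rpow_nonneg (Nat.cast_nonneg _) _), abs_mul,
      abs_of_nonneg (Real.rpow_nonneg (Nat.cast_nonneg m) _)]
    calc ((Z i : ℝ)) ^ (1 / p)
        ≤ ((m : ℝ) * |x i| ^ p) ^ (1 / p) :=
          Real.rpow_le_rpow (Nat.cast_nonneg _) hZle hq.le
      _ = (m : ℝ) ^ (1 / p) * (|x i| ^ p) ^ (1 / p) :=
          Real.mul_rpow (Nat.cast_nonneg _) (Real.rpow_nonneg (abs_nonneg _) _)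
      _ = (m : ℝ) ^ (1 / p) * |x i| := by
          rw [← Real.rpow_mul (abs_nonneg (x i)), mul_one_div_cancel hpne, Real.rpow_one]
  have h3 : (K : ℝ) ≤ (m : ℝ) * (N x) ^ p := by
    have h4 : ((K : ℝ)) ^ (1 / p) ≤ (m : ℝ) ^ (1 / p) * N x := le_trans h1 h2
    have h5 := Real.rpow_le_rpow (Real.rpow_nonneg (Nat.cast_nonneg _) _) h4 hp0.le
    rw [← Real.rpow_mul (Nat.cast_nonneg K), one_div_mul_cancel hpne, Real.rpow_one] at h5
    rw [Real.mul_rpow (Real.rpow_nonneg (Nat.cast_nonneg m) _) hNx] at h5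
    rw [← Real.rpow_mul (Nat.cast_nonneg m), one_div_mul_cancel hpne, Real.rpow_one] at h5
    exact h5
  have h6 : ∑ i ∈ x.support, |x i| ^ p ≤ ((K : ℝ) + dd) / m := by
    have hKsum : (K : ℝ) = ∑ i ∈ x.support, ((Z i : ℕ) : ℝ) := by
      have hKn : K = ∑ i ∈ x.support, Z i := by
        rw [hK, Finsupp.sum]
        apply Finset.sum_subset Finsupp.support_onFinset_subset
        intro i _ hi
        exact Finsupp.notMem_support_iff.1 hi
      rw [hKn, Nat.cast_sum]
    have hptw : ∀ i ∈ x.support, |x i| ^ p ≤ ((Z i : ℝ) + 1) / m := by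
      intro i _
      rw [le_div_iff₀ hmR]
      have hfl := Nat.lt_succ_floor ((m : ℝ) * |x i| ^ p)
      rw [hZapp]
      push_cast at hfl ⊢
      nlinarith [hfl]
    calc ∑ i ∈ x.support, |x i| ^ p
        ≤ ∑ i ∈ x.support, ((Z i : ℝ) + 1) / m := Finset.sum_le_sum hptw
      _ = ((∑ i ∈ x.support, ((Z i : ℝ))) + dd) / m := by
          rw [← Finset.sum_div, Finset.sum_add_distrib, Finset.sum_const, nsmul_eq_mul,
            mul_one, hdd]
      _ = ((K : ℝ) + dd) / m := by rw [hKsum]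
  have hdm : dd / m ≤ ε := by
    rw [div_le_iff₀ hmR]
    have := (div_lt_iff₀ hε).1 hm
    nlinarith [this]
  calc ∑ i ∈ x.support, |x i| ^ p
      ≤ ((K : ℝ) + dd) / m := h6
    _ ≤ ((m : ℝ) * (N x) ^ p + dd) / m := by gcongr
    _ = (N x) ^ p + dd / m := by
        rw [add_div, mul_div_cancel_left₀ _ (ne_of_gt hmR)]
    _ ≤ (N x) ^ p + ε := by linarith
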